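/- For every real α > 0 and every real p with 0 < p < 1 there exists N₀ such that for every cooperative Boolean network f of dimension N ≥ N₀ and every time t > 0, the number of perturbation pairs (s(0), s*(0)) satisfying H(f^[t](s(0)), f^[t](s*(0))) ≥ αN is strictly less than p·N·2^N. -/

import Mathlib

/-- The state space of an `N`-dimensional Boolean network. -/
abbrev BState (N : ℕ) := Fin N → Bool

/-- The attractor (eventual periodic orbit) reached from initial condition `s`:
the set of states visited infinitely often by the trajectory `t ↦ f^[t] s`. -/
def attractor {N : ℕ} (f : BState N → BState N) (s : BState N) : Set (BState N) :=
  {x | ∀ T : ℕ, ∃ t ≥ T, f^[t] s = x}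

/-- The network `f` is `p`-`c`-chaotic: more than `p·2^N` initial conditions
reach an attractor of length `> c^N`. -/
def pcChaotic {N : ℕ} (f : BState N → BState N) (p c : ℝ) : Prop :=
  p * 2 ^ N < (({s : BState N | (c : ℝ) ^ N < ((attractor f s).ncard : ℝ)}).ncard : ℝ)

/-- Ordered pairs of states at Hamming distance exactly 1. -/
def PerturbPairs (N : ℕ) : Set (BState N × BState N) :=
  {q | hammingDist q.1 q.2 = 1}

/-- `p`-coalescence: more than `p·N·2^N` perturbation pairs have trajectories that
coincide at some positive time. -/
def pCoalescent {N : ℕ} (f : BState N → BState N) (p : ℝ) : Prop :=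
  p * ((N : ℝ) * 2 ^ N) <
    (({q ∈ PerturbPairs N | ∃ t > 0, f^[t] q.1 = f^[t] q.2}).ncard : ℝ)

/-- `p`-instability: at least `p·N·2^N` perturbation pairs reach different attractors. -/
def pUnstable {N : ℕ} (f : BState N → BState N) (p : ℝ) : Prop :=
  p * ((N : ℝ) * 2 ^ N) ≤
    (({q ∈ PerturbPairs N | attractor f q.1 ≠ attractor f q.2}).ncard : ℝ)

/-- Coordinate `j` is an input of coordinate `i` of `f` (equivalently, `i` is an
output of `j`): the `i`-th coordinate of `f` depends on the `j`-th coordinate. -/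
def isInput {N : ℕ} (f : BState N → BState N) (j i : Fin N) : Prop :=
  ∃ s s' : BState N, (∀ k, k ≠ j → s k = s' k) ∧ f s i ≠ f s' i

/-- Every coordinate has at most 2 inputs and at most 2 outputs. -/
def biQuadratic {N : ℕ} (f : BState N → BState N) : Prop :=
  ∀ i : Fin N, ({j | isInput f j i}.ncard ≤ 2) ∧ ({j | isInput f i j}.ncard ≤ 2)

/-- Bi-quadratic and every coordinate has exactly 2 inputs. -/
def strictlyBiQuadratic {N : ℕ} (f : BState N → BState N) : Prop :=
  biQuadratic f ∧ ∀ i : Fin N, {j | isInput f j i}.ncard = 2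

/-- `p`-`α`-decoherence: at least `p·N·2^N` perturbation pairs have Hamming distance
`≥ α·N` at infinitely many times `t > 0`. -/
def pAlphaDecoherent {N : ℕ} (f : BState N → BState N) (p α : ℝ) : Prop :=
  p * ((N : ℝ) * 2 ^ N) ≤
    (({q ∈ PerturbPairs N |
        ∀ T : ℕ, ∃ t > T,
          α * N ≤ (hammingDist (f^[t] q.1) (f^[t] q.2) : ℝ)}).ncard : ℝ)

/-- `p`-`α`-`q`-decoherence: at least `p·N·2^N` perturbation pairs are such that, for
all sufficiently large `t*`, the Hamming distance is `≥ α·N` on at least a proportion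
`q` of the times `t ∈ {0, …, t*}`. -/
def pAlphaQDecoherent {N : ℕ} (f : BState N → BState N) (p α q : ℝ) : Prop :=
  p * ((N : ℝ) * 2 ^ N) ≤
    (({r ∈ PerturbPairs N |
        ∃ T₀ : ℕ, ∀ tstar : ℕ, T₀ ≤ tstar →
          q * ((tstar : ℝ) + 1) ≤
            (({t : ℕ | t ≤ tstar ∧
                α * N ≤ (hammingDist (f^[t] r.1) (f^[t] r.2) : ℝ)}).ncard : ℝ)}).ncard : ℝ)
open Finset

section AuxSepRare
variable {N : ℕ}

def bflip (s : BState N) (i : Fin N) : BState N := Function.update s i (!(s i))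

lemma bflip_self (s : BState N) (i : Fin N) : bflip s i i = !(s i) := by
  simp [bflip]

lemma bflip_ne (s : BState N) {i j : Fin N} (h : j ≠ i) : bflip s i j = s j := by
  simp [bflip, Function.update_of_ne h]

lemma bflip_bflip (s : BState N) (i : Fin N) : bflip (bflip s i) i = s := by
  funext j
  by_cases h : j = i
  · subst h; simp [bflip_self]
  · simp [bflip_ne _ h]

def wt (s : BState N) : ℕ := #{i | s i = true}

lemma wt_le (s : BState N) : wt s ≤ N := by
  simpa [wt] using (card_filter_le univ (fun i => s i = true))

lemma le_iff_pt {u v : BState N} : u ≤ v ↔ ∀ i, u i = true → v i = true := by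
  constructor
  · intro h i hi
    have := h i
    rw [hi] at this
    exact Bool.eq_true_of_true_le this
  · intro h i
    cases hu : u i
    · exact Bool.false_le _
    · rw [h i hu]

lemma dist_eq_of_le {u v : BState N} (h : u ≤ v) :
    hammingDist u v + wt u = wt v := by
  classical
  have hsub : univ.filter (fun i => u i = true) ⊆ univ.filter (fun i => v i = true) := by
    intro i hi
    simp only [mem_filter, mem_univ, true_and] at hi ⊢
    exact le_iff_pt.mp h i hi
  have hdiff : univ.filter (fun i => u i ≠ v i) = univ.filter (fun i => v i = true) \ univ.filter (fun i => u i = true) := by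
    ext i
    have := le_iff_pt.mp h i
    simp only [mem_filter, mem_univ, true_and, mem_sdiff]
    cases hu : u i <;> cases hv : v i <;> simp_all
  have h1 : hammingDist u v = wt v - wt u := by
    rw [hammingDist, hdiff, card_sdiff_of_subset hsub]; rfl
  have h2 : wt u ≤ wt v := card_le_card hsub
  omega

lemma sum_bflip_eq (H : BState N → ℝ) (j : Fin N) (b : Bool) :
    ∑ s ∈ univ.filter (fun s => s j = b), H (bflip s j)
      = ∑ s ∈ univ.filter (fun s => s j = !b), H s := by
  refine Finset.sum_bij' (fun s _ => bflip s j) (fun s _ => bflip s j) ?_ ?_ ?_ ?_ ?_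
  · intro a ha; simp only [mem_filter, mem_univ, true_and] at ha ⊢
    rw [bflip_self, ha]
  · intro a ha; simp only [mem_filter, mem_univ, true_and] at ha ⊢
    rw [bflip_self, ha, Bool.not_not]
  · intro a _; exact bflip_bflip a j
  · intro a _; exact bflip_bflip a j
  · intro a _; rfl

def eps (s : BState N) (i : Fin N) : ℝ := if s i = true then 1 else -1

lemma eps_bflip_ne {s : BState N} {i j : Fin N} (h : i ≠ j) : eps (bflip s j) i = eps s i := by
  rw [eps, eps, bflip_ne _ h]

lemma ortho {i j : Fin N} (hij : i ≠ j) : ∑ s : BState N, eps s i * eps s j = 0 := by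
  classical
  rw [← Finset.sum_filter_add_sum_filter_not univ (fun s => s j = true)]
  have h1 : ∑ s ∈ univ.filter (fun s => s j = true), eps s i * eps s j
      = ∑ s ∈ univ.filter (fun s => s j = true), eps s i := by
    apply Finset.sum_congr rfl
    intro s hs
    simp only [mem_filter, mem_univ, true_and] at hs
    simp [eps, hs]
  have h2 : ∑ s ∈ univ.filter (fun s => ¬ s j = true), eps s i * eps s j
      = -∑ s ∈ univ.filter (fun s => s j = false), eps s i := by
    rw [← Finset.sum_neg_distrib]
    apply Finset.sum_congr
    · apply Finset.filter_congr; intro s _; simp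
    · intro s hs
      simp only [mem_filter, mem_univ, true_and] at hs
      simp [eps, hs]
  have h3 : ∑ s ∈ univ.filter (fun s => s j = false), eps s i
      = ∑ s ∈ univ.filter (fun s => s j = true), eps s i := by
    have := sum_bflip_eq (fun s => eps s i) j false
    simp only [Bool.not_false] at this
    rw [← this]
    apply Finset.sum_congr rfl
    intro s _
    exact (eps_bflip_ne hij).symm
  rw [h1, h2, h3]; ring

lemma card_bstate : Fintype.card (BState N) = 2 ^ N := by
  simp [BState]

def csum (s : BState N) : ℝ := ∑ i, eps s i

lemma sum_csum_sq : ∑ s : BState N, (csum s) ^ 2 = (N : ℝ) * 2 ^ N := by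
  classical
  have h : ∀ s : BState N, (csum s) ^ 2 = ∑ i, ∑ j, eps s i * eps s j := by
    intro s
    rw [csum, sq, Finset.sum_mul_sum]
  rw [Finset.sum_congr rfl (fun s _ => h s), Finset.sum_comm]
  have h2 : ∀ i : Fin N, ∑ s : BState N, ∑ j, eps s i * eps s j = (2:ℝ) ^ N := by
    intro i
    rw [Finset.sum_comm]
    have h3 : ∀ j : Fin N, j ∈ univ →  j ≠ i → ∑ s : BState N, eps s i * eps s j = 0 :=
      fun j _ hj => ortho (Ne.symm hj)
    rw [Finset.sum_eq_single_of_mem i (mem_univ i) h3]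
    have : ∀ s : BState N, eps s i * eps s i = 1 := by
      intro s; rw [eps]; split <;> norm_num
    rw [Finset.sum_congr rfl (fun s _ => this s), Finset.sum_const, card_univ, card_bstate]
    simp
  rw [Finset.sum_congr rfl (fun i _ => h2 i), Finset.sum_const, card_univ, Fintype.card_fin]
  simp [mul_comm]

lemma sum_abs_csum : ∑ s : BState N, |csum s| ≤ (2:ℝ) ^ N * Real.sqrt N := by
  classical
  have cs := sq_sum_le_card_mul_sum_sq (s := (univ : Finset (BState N)))
      (f := fun s => |csum s|)
  have hsq : ∀ s : BState N, |csum s| ^ 2 = (csum s) ^ 2 := fun s => sq_abs _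
  rw [Finset.sum_congr rfl (fun s _ => hsq s), sum_csum_sq, card_univ, card_bstate] at cs
  have h0 : (0:ℝ) ≤ ∑ s : BState N, |csum s| :=
    Finset.sum_nonneg (fun s _ => abs_nonneg _)
  have h1 : ((2:ℕ) ^ N : ℝ) * ((N : ℝ) * 2 ^ N) = ((2:ℝ) ^ N * Real.sqrt N) ^ 2 := by
    rw [mul_pow, Real.sq_sqrt (Nat.cast_nonneg N)]
    push_cast; ring
  have h2 : (0:ℝ) ≤ (2:ℝ) ^ N * Real.sqrt N := by positivity
  push_cast at cs h1
  nlinarith [cs, h1, h0, h2, sq_nonneg ((∑ s : BState N, |csum s|) - (2:ℝ) ^ N * Real.sqrt N)]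

lemma bflip_le (s : BState N) (i : Fin N) (h : s i = true) : bflip s i ≤ s := by
  intro j
  by_cases hj : j = i
  · subst hj; rw [bflip_self, h]; exact Bool.false_le _
  · rw [bflip_ne _ hj]

lemma le_bflip (s : BState N) (i : Fin N) (h : s i = false) : s ≤ bflip s i := by
  intro j
  by_cases hj : j = i
  · subst hj; rw [bflip_self, h]; exact Bool.false_le _
  · rw [bflip_ne _ hj]

lemma main_sum (F : BState N → BState N) (hF : Monotone F) :
    ∑ p : BState N × Fin N, (hammingDist (F p.1) (F (bflip p.1 p.2)) : ℝ)
      ≤ 2 * (N : ℝ) * 2 ^ N * Real.sqrt N := by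
  classical
  set G : BState N → ℝ := fun s => (wt (F s) : ℝ) with hGdef
  have hGN : ∀ s, G s ≤ N := fun s => by simp only [hGdef]; exact_mod_cast wt_le (F s)
  have hd : ∀ u v : BState N, u ≤ v → (hammingDist (F u) (F v) : ℝ) = G v - G u := by
    intro u v h
    have := dist_eq_of_le (hF h)
    have : (hammingDist (F u) (F v) : ℝ) + wt (F u) = wt (F v) := by exact_mod_cast this
    simp only [hGdef]; linarith
  have hi : ∀ i, ∑ s : BState N, (hammingDist (F s) (F (bflip s i)) : ℝ)
      = 2 * ∑ s : BState N, G s * eps s i := by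
    intro i
    have hnot : (univ.filter (fun s : BState N => ¬ s i = true))
        = univ.filter (fun s : BState N => s i = false) := by
      apply filter_congr; intro s _; simp
    have hsplit := Finset.sum_filter_add_sum_filter_not univ (fun s : BState N => s i = true)
      (fun s => (hammingDist (F s) (F (bflip s i)) : ℝ))
    have hsplit2 := Finset.sum_filter_add_sum_filter_not univ (fun s : BState N => s i = true)
      (fun s => G s * eps s i)
    rw [hnot] at hsplit hsplit2
    have hT : ∑ s ∈ univ.filter (fun s : BState N => s i = true),
        (hammingDist (F s) (F (bflip s i)) : ℝ)
        = ∑ s ∈ univ.filter (fun s : BState N => s i = true), (G s - G (bflip s i)) := by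
      apply Finset.sum_congr rfl
      intro s hs
      simp only [mem_filter, mem_univ, true_and] at hs
      rw [hammingDist_comm]
      exact hd _ _ (bflip_le s i hs)
    have hFa : ∑ s ∈ univ.filter (fun s : BState N => s i = false),
        (hammingDist (F s) (F (bflip s i)) : ℝ)
        = ∑ s ∈ univ.filter (fun s : BState N => s i = false), (G (bflip s i) - G s) := by
      apply Finset.sum_congr rfl
      intro s hs
      simp only [mem_filter, mem_univ, true_and] at hs
      exact hd _ _ (le_bflip s i hs)
    have hb1 : ∑ s ∈ univ.filter (fun s : BState N => s i = true), G (bflip s i)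
        = ∑ s ∈ univ.filter (fun s : BState N => s i = false), G s := by
      have := sum_bflip_eq G i true
      simpa using this
    have hb2 : ∑ s ∈ univ.filter (fun s : BState N => s i = false), G (bflip s i)
        = ∑ s ∈ univ.filter (fun s : BState N => s i = true), G s := by
      have := sum_bflip_eq G i false
      simpa using this
    have hgT : ∑ s ∈ univ.filter (fun s : BState N => s i = true), G s * eps s i
        = ∑ s ∈ univ.filter (fun s : BState N => s i = true), G s := by
      apply Finset.sum_congr rfl
      intro s hs
      simp only [mem_filter, mem_univ, true_and] at hs
      simp [eps, hs]
    have hgF : ∑ s ∈ univ.filter (fun s : BState N => s i = false), G s * eps s i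
        = -∑ s ∈ univ.filter (fun s : BState N => s i = false), G s := by
      rw [← Finset.sum_neg_distrib]
      apply Finset.sum_congr rfl
      intro s hs
      simp only [mem_filter, mem_univ, true_and] at hs
      simp [eps, hs]
    rw [← hsplit, ← hsplit2, hT, hFa, Finset.sum_sub_distrib, Finset.sum_sub_distrib,
      hb1, hb2, hgT, hgF]
    ring
  have hprod : ∑ p : BState N × Fin N, (hammingDist (F p.1) (F (bflip p.1 p.2)) : ℝ)
      = ∑ s : BState N, ∑ i : Fin N, (hammingDist (F s) (F (bflip s i)) : ℝ) :=
    Fintype.sum_prod_type _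
  rw [hprod, Finset.sum_comm]
  calc ∑ i : Fin N, ∑ s : BState N, (hammingDist (F s) (F (bflip s i)) : ℝ)
      = ∑ i : Fin N, 2 * ∑ s : BState N, G s * eps s i := by
        exact Finset.sum_congr rfl (fun i _ => hi i)
    _ = 2 * ∑ s : BState N, G s * csum s := by
        rw [← Finset.mul_sum, Finset.sum_comm]
        congr 1
        apply Finset.sum_congr rfl
        intro s _
        rw [csum, Finset.mul_sum]
    _ ≤ 2 * ∑ s : BState N, (N : ℝ) * |csum s| := by
        apply mul_le_mul_of_nonneg_left _ (by norm_num)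
        apply Finset.sum_le_sum
        intro s _
        rcases le_or_gt 0 (csum s) with h | h
        · rw [abs_of_nonneg h]
          exact mul_le_mul_of_nonneg_right (hGN s) h
        · have h1 : G s * csum s ≤ 0 :=
            mul_nonpos_of_nonneg_of_nonpos (Nat.cast_nonneg _) h.le
          have h2 : (0:ℝ) ≤ (N : ℝ) * |csum s| := by positivity
          linarith
    _ ≤ 2 * (N : ℝ) * 2 ^ N * Real.sqrt N := by
        rw [← Finset.mul_sum]
        have := sum_abs_csum (N := N)
        have hN : (0:ℝ) ≤ (N:ℝ) := Nat.cast_nonneg _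
        nlinarith [this, hN]

lemma exists_bflip {q : BState N × BState N} (h : hammingDist q.1 q.2 = 1) :
    ∃ i, q.2 = bflip q.1 i := by
  classical
  rw [hammingDist, Finset.card_eq_one] at h
  obtain ⟨i, hi⟩ := h
  refine ⟨i, funext fun j => ?_⟩
  by_cases hj : j = i
  · subst hj
    have : j ∈ ({j} : Finset (Fin N)) := Finset.mem_singleton_self j
    rw [← hi] at this
    simp only [mem_filter, mem_univ, true_and] at this
    rw [bflip_self]
    cases h1 : q.1 j <;> cases h2 : q.2 j <;> simp_all
  · have : j ∉ ({i} : Finset (Fin N)) := by simp [hj]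
    rw [← hi] at this
    simp only [mem_filter, mem_univ, true_and, not_not] at this
    rw [bflip_ne _ hj, this]

lemma m_inj : Function.Injective
    (fun p : BState N × Fin N => (p.1, bflip p.1 p.2)) := by
  rintro ⟨s, i⟩ ⟨s', i'⟩ h
  simp only [Prod.mk.injEq] at h
  obtain ⟨rfl, h2⟩ := h
  simp only [Prod.mk.injEq, true_and]
  by_contra hne
  have := congrFun h2 i
  rw [bflip_self, bflip_ne _ (fun hh => hne hh)] at this
  cases h0 : s i <;> simp_all

end AuxSepRare

/-- Theorem 3.6, first part: in a cooperative Boolean network of sufficiently large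
dimension, for every fixed time `t > 0`, fewer than `p·N·2^N` perturbation pairs have
Hamming distance `≥ α·N` at time `t`. -/
theorem cooperative_fixed_time_separation_rare
    (α p : ℝ) (hα : 0 < α) (hp0 : 0 < p) (hp1 : p < 1) :
    ∃ N₀ : ℕ, ∀ N : ℕ, N₀ ≤ N →
      ∀ f : BState N → BState N, Monotone f →
        ∀ t : ℕ, 0 < t →
          (({q ∈ PerturbPairs N |
              α * N ≤ (hammingDist (f^[t] q.1) (f^[t] q.2) : ℝ)}).ncard : ℝ)
            < p * ((N : ℝ) * 2 ^ N) := by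
  classical
  refine ⟨⌈4 / (α ^ 2 * p ^ 2)⌉₊ + 1, fun N hN f hf t ht => ?_⟩
  set F := f^[t] with hFdef
  have hFmono : Monotone F := hf.iterate t
  have hN1 : 1 ≤ N := le_trans (Nat.le_add_left 1 _) hN
  have hNR : (4 / (α ^ 2 * p ^ 2) : ℝ) < N := by
    have h1 : (⌈4 / (α ^ 2 * p ^ 2)⌉₊ : ℝ) < N := by
      exact_mod_cast Nat.lt_of_lt_of_le (Nat.lt_succ_self _) hN
    exact lt_of_le_of_lt (Nat.le_ceil _) h1
  have hNpos : (0:ℝ) < N := by positivity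
  set S : Finset (BState N × BState N) :=
    univ.filter (fun q => hammingDist q.1 q.2 = 1 ∧
      α * N ≤ (hammingDist (F q.1) (F q.2) : ℝ)) with hSdef
  have hAS : {q ∈ PerturbPairs N |
      α * N ≤ (hammingDist (F q.1) (F q.2) : ℝ)} = (↑S : Set (BState N × BState N)) := by
    ext q
    simp [hSdef, PerturbPairs, Set.mem_setOf_eq]
  have hcard : ({q ∈ PerturbPairs N |
      α * N ≤ (hammingDist (F q.1) (F q.2) : ℝ)}).ncard = S.card := by
    rw [hAS, Set.ncard_coe_finset]
  rw [hcard]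
  -- Markov
  have hmarkov : (S.card : ℝ) * (α * N) ≤
      ∑ q ∈ S, (hammingDist (F q.1) (F q.2) : ℝ) := by
    have := Finset.card_nsmul_le_sum S (fun q => (hammingDist (F q.1) (F q.2) : ℝ)) (α * N)
      (fun q hq => by
        simp only [hSdef, mem_filter] at hq
        exact hq.2.2)
    simpa [nsmul_eq_mul] using this
  -- sum over S ≤ sum over all flip pairs
  have hsub : S ⊆ Finset.image (fun p : BState N × Fin N => (p.1, bflip p.1 p.2)) univ := by
    intro q hq
    simp only [hSdef, mem_filter] at hq
    obtain ⟨i, hi⟩ := exists_bflip hq.2.1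
    refine Finset.mem_image.mpr ⟨(q.1, i), mem_univ _, ?_⟩
    simp [← hi]
  have hsum1 : ∑ q ∈ S, (hammingDist (F q.1) (F q.2) : ℝ) ≤
      ∑ q ∈ Finset.image (fun p : BState N × Fin N => (p.1, bflip p.1 p.2)) univ,
        (hammingDist (F q.1) (F q.2) : ℝ) :=
    Finset.sum_le_sum_of_subset_of_nonneg hsub (fun q _ _ => by positivity)
  have hsum2 : ∑ q ∈ Finset.image (fun p : BState N × Fin N => (p.1, bflip p.1 p.2)) univ,
      (hammingDist (F q.1) (F q.2) : ℝ)
      = ∑ p : BState N × Fin N, (hammingDist (F p.1) (F (bflip p.1 p.2)) : ℝ) := by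
    rw [Finset.sum_image (fun a _ b _ h => m_inj h)]
  have hbig : (S.card : ℝ) * (α * N) ≤ 2 * (N : ℝ) * 2 ^ N * Real.sqrt N := by
    calc (S.card : ℝ) * (α * N) ≤ _ := hmarkov
      _ ≤ _ := hsum1
      _ = _ := hsum2
      _ ≤ _ := main_sum F hFmono
  -- numerics: √N < α p N / 2
  have hsqrt : Real.sqrt N < α * p * N / 2 := by
    have h4 : 4 < α ^ 2 * p ^ 2 * N := by
      have hpos : (0:ℝ) < α ^ 2 * p ^ 2 := by positivity
      rw [div_lt_iff₀ hpos] at hNR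
      linarith [hNR]
    have hlt : (N : ℝ) < (α * p * N / 2) ^ 2 := by
      have : (α * p * N / 2) ^ 2 = α ^ 2 * p ^ 2 * N * N / 4 := by ring
      rw [this]
      nlinarith [h4, hNpos]
    calc Real.sqrt N < Real.sqrt ((α * p * N / 2) ^ 2) := Real.sqrt_lt_sqrt (Nat.cast_nonneg _) hlt
      _ = α * p * N / 2 := Real.sqrt_sq (by positivity)
  have h2N : (0:ℝ) < 2 ^ N := by positivity
  have hαN : (0:ℝ) < α * N := by positivity
  have hfinal : (S.card : ℝ) * (α * N) < (p * ((N : ℝ) * 2 ^ N)) * (α * N) := by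
    calc (S.card : ℝ) * (α * N) ≤ 2 * (N : ℝ) * 2 ^ N * Real.sqrt N := hbig
      _ < 2 * (N : ℝ) * 2 ^ N * (α * p * N / 2) := by
          apply mul_lt_mul_of_pos_left hsqrt (by positivity)
      _ = (p * ((N : ℝ) * 2 ^ N)) * (α * N) := by ring
  exact lt_of_mul_lt_mul_right hfinal hαN.le
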